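/- There exist K₀ ∈ ℕ and, for every K ≥ K₀, positive integers A, D and a partition {(A+iD)^j : i, j ∈ {0,…,K}} = B₁ ∪ B₂ such that neither B₁ nor B₂ contains a set of the form {b·(a+i·d)^j : i ∈ {0,1,2}, j ∈ {0,1}} with a, b, d ∈ ℕ. -/

import Mathlib

set_option maxHeartbeats 1000000

private lemma aux_pow_add_helper {A p q r : ℕ} (hA : 2 ≤ A) (hpq : p ≤ q)
    (h : A ^ p + A ^ q = 2 * A ^ r) : p = r ∧ q = r := by
  rcases eq_or_lt_of_le hpq with rfl | hlt
  · have hpr : A ^ p = A ^ r := by omega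
    have := Nat.pow_right_injective hA hpr
    exact ⟨this, this⟩
  · exfalso
    rcases le_or_gt r p with h1 | h2
    · have e1 : A ^ r ≤ A ^ p := Nat.pow_le_pow_right (by omega) h1
      have e2 : A ^ p < A ^ q := Nat.pow_lt_pow_right (by omega) hlt
      omega
    · have d1 : A ^ (p + 1) ∣ A ^ q := pow_dvd_pow A (by omega)
      have d2 : A ^ (p + 1) ∣ 2 * A ^ r := (pow_dvd_pow A (by omega)).mul_left 2
      have d3 : A ^ (p + 1) ∣ A ^ p := by
        have hd := Nat.dvd_sub d2 d1
        have hE : 2 * A ^ r - A ^ q = A ^ p := by rw [← h]; omega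
        rwa [hE] at hd
      have h4 : A ^ (p + 1) ≤ A ^ p := Nat.le_of_dvd (pow_pos (by omega) _) d3
      have h5 : A ^ p < A ^ (p + 1) := Nat.pow_lt_pow_right (by omega) (by omega)
      omega

private lemma aux_pow_add {A p q r : ℕ} (hA : 2 ≤ A)
    (h : A ^ p + A ^ q = 2 * A ^ r) : p = r ∧ q = r := by
  rcases le_total p q with hpq | hqp
  · exact aux_pow_add_helper hA hpq h
  · have := aux_pow_add_helper hA hqp (by rw [Nat.add_comm]; exact h)
    exact ⟨this.2, this.1⟩

private lemma aux_expand (a d : ℤ) : ∀ (m : ℕ) (x : ℤ), ∃ r : ℤ,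
    (a + x * d) ^ (m + 2) =
      a ^ (m + 2) + ((m : ℤ) + 2) * a ^ (m + 1) * x * d
        + (Nat.choose (m + 2) 2 : ℤ) * a ^ m * x ^ 2 * d ^ 2 + r * d ^ 3 := by
  intro m
  induction m with
  | zero =>
    intro x
    refine ⟨0, ?_⟩
    norm_num [Nat.choose]
    ring
  | succ n ih =>
    intro x
    obtain ⟨r, hr⟩ := ih x
    refine ⟨a * r + (Nat.choose (n + 2) 2 : ℤ) * a ^ n * x ^ 3 + x * r * d, ?_⟩
    have hc : (Nat.choose (n + 3) 2 : ℤ) = (Nat.choose (n + 2) 2 : ℤ) + ((n : ℤ) + 2) := by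
      rw [show n + 3 = (n + 2) + 1 from rfl, Nat.choose_succ_succ (n + 2) 1,
        Nat.choose_one_right]
      push_cast
      ring
    have hp : (a + x * d) ^ (n + 1 + 2) = (a + x * d) ^ (n + 2) * (a + x * d) := by
      rw [← pow_succ]
    rw [hp, hr, show n + 1 + 2 = n + 3 from rfl, hc]
    push_cast
    ring

private lemma aux_int_zero {D x : ℤ} (hdvd : D ∣ x) (h : |x| < D) : x = 0 := by
  rcases hdvd with ⟨c, rfl⟩
  rcases eq_or_ne c 0 with rfl | hc
  · simp
  · exfalso
    have h1 : 1 ≤ |c| := Int.one_le_abs hc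
    have hD : 0 < D := lt_of_le_of_lt (abs_nonneg _) h
    have h2 : |D * c| = |D| * |c| := abs_mul D c
    have h3 : |D| = D := abs_of_pos hD
    nlinarith [abs_nonneg (D * c)]



/-- Beiglböck–Bergelson–Hindman–Strauss, Theorem 4.9: configurations
`{(A+iD)^j : i, j ≤ K}` are not unbreakable.  There is `K₀` such that for every
`K ≥ K₀` one can find `A, D` and a two-cell partition of
`{(A+iD)^j : i, j ∈ {0,…,K}}` neither cell of which contains a configuration
`{b·(a+i·d)^j : i ∈ {0,1,2}, j ∈ {0,1}}`. -/
theorem not_unbreakable :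
    ∃ K₀ : ℕ, ∀ K : ℕ, K₀ ≤ K → ∃ A D : ℕ, 0 < A ∧ 0 < D ∧
      ∃ B₁ B₂ : Set ℕ,
        B₁ ∪ B₂ = {n | ∃ i j : ℕ, i ≤ K ∧ j ≤ K ∧ n = (A + i * D) ^ j} ∧
        B₁ ∩ B₂ = ∅ ∧
        ∀ B ∈ ({B₁, B₂} : Set (Set ℕ)),
          ¬ ∃ a b d : ℕ, 0 < a ∧ 0 < b ∧ 0 < d ∧
            ∀ i j : ℕ, i ≤ 2 → j ≤ 1 → b * (a + i * d) ^ j ∈ B := by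
  refine ⟨2, fun K hK => ?_⟩
  obtain ⟨A, hA⟩ : ∃ A : ℕ, A = K + 2 := ⟨K + 2, rfl⟩
  obtain ⟨D, hD⟩ : ∃ Dv : ℕ, Dv = A ^ (5 * K) + 1 := ⟨A ^ (5 * K) + 1, rfl⟩
  have hA2 : 2 ≤ A := by omega
  have hApos : 0 < A := by omega
  have hDpos : 0 < D := by rw [hD]; exact Nat.succ_pos _
  -- numeric facts
  have hMaster : 2 * K ^ 4 * A ^ K < D := by
    have h5 : 2 * K ^ 4 ≤ A ^ 5 := by
      have h1 : K ^ 4 ≤ A ^ 4 := Nat.pow_le_pow_left (by omega) 4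
      calc 2 * K ^ 4 ≤ 2 * A ^ 4 := by linarith
        _ ≤ A * A ^ 4 := Nat.mul_le_mul_right _ hA2
        _ = A ^ 5 := by ring
    calc 2 * K ^ 4 * A ^ K ≤ A ^ 5 * A ^ K := Nat.mul_le_mul_right _ h5
      _ = A ^ (5 + K) := (pow_add A 5 K).symm
      _ ≤ A ^ (5 * K) := Nat.pow_le_pow_right hApos (by omega)
      _ < D := by rw [hD]; exact Nat.lt_succ_self _
  have hK4 : 1 ≤ K ^ 4 := Nat.one_le_pow _ _ (by omega)
  have h2AK : 2 * A ^ K < D := by nlinarith [pow_pos hApos K]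
  have hAK : A ^ K < D := by omega
  have hN1 : K * A ^ K * (2 * K) < D := by
    have hK24 : K ^ 2 ≤ K ^ 4 := Nat.pow_le_pow_right (by omega) (by omega)
    calc K * A ^ K * (2 * K) = 2 * K ^ 2 * A ^ K := by ring
      _ ≤ 2 * K ^ 4 * A ^ K := by
          have := Nat.mul_le_mul_right (A ^ K) (Nat.mul_le_mul_left 2 hK24)
          simpa using this
      _ < D := hMaster
  have hN2 : K ^ 2 * A ^ K * (2 * K ^ 2) < D := by
    calc K ^ 2 * A ^ K * (2 * K ^ 2) = 2 * K ^ 4 * A ^ K := by ring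
      _ < D := hMaster
  -- mod D facts
  have hmod : ∀ i j : ℕ, (A + i * D) ^ j % D = A ^ j % D := by
    intro i j
    have h1 : (A + i * D) % D = A % D := Nat.add_mul_mod_self_right A i D
    exact Nat.ModEq.pow j h1
  have hpowK : ∀ j : ℕ, j ≤ K → A ^ j ≤ A ^ K := fun j hj =>
    Nat.pow_le_pow_right hApos hj
  refine ⟨A, D, hApos, hDpos, ?_⟩
  refine ⟨{n | ∃ i j, i ≤ K ∧ j ≤ K ∧ j ≠ 1 ∧ n = (A + i * D) ^ j},
    {n | ∃ i, i ≤ K ∧ n = A + i * D}, ?_, ?_, ?_⟩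
  · -- union
    ext n
    simp only [Set.mem_union, Set.mem_setOf_eq]
    constructor
    · rintro (⟨i, j, hi, hj, hj1, rfl⟩ | ⟨i, hi, rfl⟩)
      · exact ⟨i, j, hi, hj, rfl⟩
      · exact ⟨i, 1, hi, by omega, (pow_one _).symm⟩
    · rintro ⟨i, j, hi, hj, rfl⟩
      by_cases h1 : j = 1
      · right; exact ⟨i, hi, by rw [h1, pow_one]⟩
      · left; exact ⟨i, j, hi, hj, h1, rfl⟩
  · -- disjoint
    ext n
    simp only [Set.mem_inter_iff, Set.mem_setOf_eq, Set.mem_empty_iff_false, iff_false,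
      not_and]
    rintro ⟨i, j, hi, hj, hj1, rfl⟩ ⟨i', hi', hEq⟩
    rcases Nat.eq_zero_or_pos j with rfl | hjpos
    · rw [pow_zero] at hEq
      have : A ≤ A + i' * D := Nat.le_add_right _ _
      omega
    · have hm1 : A ^ j % D = (A + i' * D) ^ 1 % D := by
        rw [← hmod i j, hEq, pow_one]
      rw [pow_one, Nat.add_mul_mod_self_right A i' D] at hm1
      have hb1 : A ^ j < D := lt_of_le_of_lt (hpowK j hj) hAK
      have hb2 : A < D := by
        calc A = A ^ 1 := (pow_one A).symm
          _ ≤ A ^ K := hpowK 1 (by omega)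
          _ < D := hAK
      rw [Nat.mod_eq_of_lt hb1, Nat.mod_eq_of_lt hb2] at hm1
      have : j = 1 := Nat.pow_right_injective hA2 (hm1.trans (pow_one A).symm)
      exact hj1 this
  · -- no configurations
    have no3 : ∀ x y z : ℕ,
        x ∈ {n | ∃ i j, i ≤ K ∧ j ≤ K ∧ j ≠ 1 ∧ n = (A + i * D) ^ j} →
        y ∈ {n | ∃ i j, i ≤ K ∧ j ≤ K ∧ j ≠ 1 ∧ n = (A + i * D) ^ j} →
        z ∈ {n | ∃ i j, i ≤ K ∧ j ≤ K ∧ j ≠ 1 ∧ n = (A + i * D) ^ j} →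
        x < y → y < z → x + z ≠ 2 * y := by
      rintro x y z hx hy hz hxy hyz hsum
      obtain ⟨i₀, j₀, hi₀, hj₀K, hj₀1, hx'⟩ := hx
      obtain ⟨i₁, j₁, hi₁, hj₁K, hj₁1, hy'⟩ := hy
      obtain ⟨i₂, j₂, hi₂, hj₂K, hj₂1, hz'⟩ := hz
      have hbase : ∀ i : ℕ, 0 < A + i * D := fun i =>
        Nat.lt_of_lt_of_le hApos (Nat.le_add_right _ _)
      have hxpos : 0 < x := by rw [hx']; exact pow_pos (hbase i₀) _
      have hjy : 2 ≤ j₁ := by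
        rcases Nat.eq_zero_or_pos j₁ with rfl | h1
        · rw [pow_zero] at hy'; omega
        · omega
      -- exponents are equal
      have e : A ^ j₀ + A ^ j₂ = 2 * A ^ j₁ := by
        have hL : (x + z) % D = (A ^ j₀ + A ^ j₂) % D := by
          rw [hx', hz']; exact Nat.ModEq.add (hmod i₀ j₀) (hmod i₂ j₂)
        have hR : (2 * y) % D = (2 * A ^ j₁) % D := by
          rw [hy']; exact Nat.ModEq.mul_left 2 (hmod i₁ j₁)
        have hfin : (A ^ j₀ + A ^ j₂) % D = (2 * A ^ j₁) % D := by
          rw [← hL, hsum, hR]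
        have b0 := hpowK j₀ hj₀K
        have b2' := hpowK j₂ hj₂K
        have b1' := hpowK j₁ hj₁K
        have hb1 : A ^ j₀ + A ^ j₂ < D := by omega
        have hb2 : 2 * A ^ j₁ < D := by omega
        rwa [Nat.mod_eq_of_lt hb1, Nat.mod_eq_of_lt hb2] at hfin
      obtain ⟨e₀, e₂⟩ := aux_pow_add hA2 e
      rw [e₀] at hx'
      rw [e₂] at hz'
      -- order of the i's
      have hii₁ : i₀ < i₁ := by
        by_contra hcon
        push_neg at hcon
        have : y ≤ x := by
          rw [hx', hy']
          exact Nat.pow_le_pow_left (by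
            have := Nat.mul_le_mul_right D hcon
            omega) _
        omega
      have hii₂ : i₁ < i₂ := by
        by_contra hcon
        push_neg at hcon
        have : z ≤ y := by
          rw [hy', hz']
          exact Nat.pow_le_pow_left (by
            have := Nat.mul_le_mul_right D hcon
            omega) _
        omega
      obtain ⟨m, hm⟩ : ∃ m, j₁ = m + 2 := ⟨j₁ - 2, by omega⟩
      have hmK : m + 2 ≤ K := by omega
      rw [hm] at hx' hy' hz'
      obtain ⟨r₀, h₀⟩ := aux_expand (A : ℤ) (D : ℤ) m (i₀ : ℤ)
      obtain ⟨r₁, h₁⟩ := aux_expand (A : ℤ) (D : ℤ) m (i₁ : ℤ)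
      obtain ⟨r₂, h₂⟩ := aux_expand (A : ℤ) (D : ℤ) m (i₂ : ℤ)
      have E : ((A : ℤ) + (i₀ : ℤ) * (D : ℤ)) ^ (m + 2)
          + ((A : ℤ) + (i₂ : ℤ) * (D : ℤ)) ^ (m + 2)
          = 2 * (((A : ℤ) + (i₁ : ℤ) * (D : ℤ)) ^ (m + 2)) := by
        have hcast : (x : ℤ) + (z : ℤ) = 2 * (y : ℤ) := by exact_mod_cast hsum
        rw [hx', hy', hz'] at hcast
        push_cast at hcast
        exact hcast
      rw [h₀, h₁, h₂] at E
      have T : ((m : ℤ) + 2) * (A : ℤ) ^ (m + 1) * ((i₀ : ℤ) + (i₂ : ℤ) - 2 * (i₁ : ℤ)) * D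
          + (Nat.choose (m + 2) 2 : ℤ) * (A : ℤ) ^ m
            * ((i₀ : ℤ) ^ 2 + (i₂ : ℤ) ^ 2 - 2 * (i₁ : ℤ) ^ 2) * (D : ℤ) ^ 2
          + (r₀ + r₂ - 2 * r₁) * (D : ℤ) ^ 3 = 0 := by
        linear_combination E
      have hDne : (D : ℤ) ≠ 0 := by exact_mod_cast hDpos.ne'
      have T' : ((m : ℤ) + 2) * (A : ℤ) ^ (m + 1) * ((i₀ : ℤ) + (i₂ : ℤ) - 2 * (i₁ : ℤ))
          + (Nat.choose (m + 2) 2 : ℤ) * (A : ℤ) ^ m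
            * ((i₀ : ℤ) ^ 2 + (i₂ : ℤ) ^ 2 - 2 * (i₁ : ℤ) ^ 2) * (D : ℤ)
          + (r₀ + r₂ - 2 * r₁) * (D : ℤ) ^ 2 = 0 := by
        apply mul_right_cancel₀ hDne
        linear_combination T
      have hdvd1 : (D : ℤ) ∣ ((m : ℤ) + 2) * (A : ℤ) ^ (m + 1)
          * ((i₀ : ℤ) + (i₂ : ℤ) - 2 * (i₁ : ℤ)) :=
        ⟨-((Nat.choose (m + 2) 2 : ℤ) * (A : ℤ) ^ m
            * ((i₀ : ℤ) ^ 2 + (i₂ : ℤ) ^ 2 - 2 * (i₁ : ℤ) ^ 2)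
            + (r₀ + r₂ - 2 * r₁) * (D : ℤ)), by linear_combination T'⟩
      have hi₀' : (i₀ : ℤ) ≤ (K : ℤ) := by exact_mod_cast hi₀
      have hi₁' : (i₁ : ℤ) ≤ (K : ℤ) := by exact_mod_cast hi₁
      have hi₂' : (i₂ : ℤ) ≤ (K : ℤ) := by exact_mod_cast hi₂
      have hi₀0 : (0 : ℤ) ≤ (i₀ : ℤ) := Int.ofNat_nonneg _
      have hi₁0 : (0 : ℤ) ≤ (i₁ : ℤ) := Int.ofNat_nonneg _
      have hi₂0 : (0 : ℤ) ≤ (i₂ : ℤ) := Int.ofNat_nonneg _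
      have hu : |(i₀ : ℤ) + (i₂ : ℤ) - 2 * (i₁ : ℤ)| ≤ 2 * (K : ℤ) := by
        rw [abs_le]; constructor <;> linarith
      have hm2 : ((m : ℤ) + 2) ≤ (K : ℤ) := by exact_mod_cast hmK
      have hA1 : (1 : ℤ) ≤ (A : ℤ) := by exact_mod_cast hApos
      have hpow1 : (A : ℤ) ^ (m + 1) ≤ (A : ℤ) ^ K := pow_le_pow_right₀ hA1 (by omega)
      have habs1 : |((m : ℤ) + 2) * (A : ℤ) ^ (m + 1)
          * ((i₀ : ℤ) + (i₂ : ℤ) - 2 * (i₁ : ℤ))| < (D : ℤ) := by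
        rw [abs_mul, abs_mul, abs_of_nonneg (by positivity : (0:ℤ) ≤ (m : ℤ) + 2),
          abs_of_nonneg (by positivity : (0:ℤ) ≤ (A : ℤ) ^ (m + 1))]
        calc ((m : ℤ) + 2) * (A : ℤ) ^ (m + 1) * |(i₀ : ℤ) + (i₂ : ℤ) - 2 * (i₁ : ℤ)|
            ≤ (K : ℤ) * (A : ℤ) ^ K * (2 * (K : ℤ)) := by
              have h0 : (0:ℤ) ≤ (K : ℤ) := by positivity
              apply mul_le_mul (mul_le_mul hm2 hpow1 (by positivity) h0) hu
                (abs_nonneg _) (by positivity)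
          _ < (D : ℤ) := by exact_mod_cast hN1
      have hT1 := aux_int_zero hdvd1 habs1
      have hne1 : ((m : ℤ) + 2) ≠ 0 := by positivity
      have hne2 : (A : ℤ) ^ (m + 1) ≠ 0 := by positivity
      have hu0 : (i₀ : ℤ) + (i₂ : ℤ) - 2 * (i₁ : ℤ) = 0 := by
        rcases mul_eq_zero.mp hT1 with h | h
        · rcases mul_eq_zero.mp h with h' | h'
          · exact absurd h' hne1
          · exact absurd h' hne2
        · exact h
      have T'' : (Nat.choose (m + 2) 2 : ℤ) * (A : ℤ) ^ m
          * (2 * ((i₁ : ℤ) - (i₀ : ℤ)) ^ 2)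
          + (r₀ + r₂ - 2 * r₁) * (D : ℤ) = 0 := by
        apply mul_right_cancel₀ hDne
        have hv : (i₀ : ℤ) ^ 2 + (i₂ : ℤ) ^ 2 - 2 * (i₁ : ℤ) ^ 2
            = 2 * ((i₁ : ℤ) - (i₀ : ℤ)) ^ 2 := by
          linear_combination ((i₂ : ℤ) + 2 * (i₁ : ℤ) - (i₀ : ℤ)) * hu0
        linear_combination T' - (((m : ℤ) + 2) * (A : ℤ) ^ (m + 1)) * hu0
          - ((Nat.choose (m + 2) 2 : ℤ) * (A : ℤ) ^ m * (D : ℤ)) * hv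
      have hdvd2 : (D : ℤ) ∣ (Nat.choose (m + 2) 2 : ℤ) * (A : ℤ) ^ m
          * (2 * ((i₁ : ℤ) - (i₀ : ℤ)) ^ 2) :=
        ⟨-(r₀ + r₂ - 2 * r₁), by linear_combination T''⟩
      have ht : (0 : ℤ) < (i₁ : ℤ) - (i₀ : ℤ) := by
        have : (i₀ : ℤ) < (i₁ : ℤ) := by exact_mod_cast hii₁
        linarith
      have htK : (i₁ : ℤ) - (i₀ : ℤ) ≤ (K : ℤ) := by linarith
      have hC1 : (1 : ℤ) ≤ (Nat.choose (m + 2) 2 : ℤ) := by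
        exact_mod_cast Nat.choose_pos (show 2 ≤ m + 2 by omega)
      have hCK : (Nat.choose (m + 2) 2 : ℤ) ≤ (K : ℤ) ^ 2 := by
        have h1 : Nat.choose (m + 2) 2 ≤ (m + 2) * (m + 2) := by
          rw [Nat.choose_two_right]
          calc (m + 2) * (m + 2 - 1) / 2 ≤ (m + 2) * (m + 2 - 1) := Nat.div_le_self _ _
            _ ≤ (m + 2) * (m + 2) := Nat.mul_le_mul_left _ (by omega)
        have h2 : (m + 2) * (m + 2) ≤ K ^ 2 := by
          rw [pow_two]
          exact Nat.mul_le_mul hmK hmK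
        exact_mod_cast le_trans h1 h2
      have hpow2 : (A : ℤ) ^ m ≤ (A : ℤ) ^ K := pow_le_pow_right₀ hA1 (by omega)
      have hTpos : (0 : ℤ) < (Nat.choose (m + 2) 2 : ℤ) * (A : ℤ) ^ m
          * (2 * ((i₁ : ℤ) - (i₀ : ℤ)) ^ 2) := by
        apply mul_pos (mul_pos (by linarith) (by positivity))
        have := pow_pos ht 2
        linarith
      have habs2 : |(Nat.choose (m + 2) 2 : ℤ) * (A : ℤ) ^ m
          * (2 * ((i₁ : ℤ) - (i₀ : ℤ)) ^ 2)| < (D : ℤ) := by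
        rw [abs_of_pos hTpos]
        calc (Nat.choose (m + 2) 2 : ℤ) * (A : ℤ) ^ m * (2 * ((i₁ : ℤ) - (i₀ : ℤ)) ^ 2)
            ≤ (K : ℤ) ^ 2 * (A : ℤ) ^ K * (2 * (K : ℤ) ^ 2) := by
              have hsq : ((i₁ : ℤ) - (i₀ : ℤ)) ^ 2 ≤ (K : ℤ) ^ 2 :=
                pow_le_pow_left₀ ht.le htK 2
              apply mul_le_mul (mul_le_mul hCK hpow2 (by positivity) (by positivity))
                (by linarith) (by positivity) (by positivity)
          _ < (D : ℤ) := by exact_mod_cast hN2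
      exact absurd (aux_int_zero hdvd2 habs2) (ne_of_gt hTpos)
    intro B hB
    simp only [Set.mem_insert_iff, Set.mem_singleton_iff] at hB
    rcases hB with rfl | rfl
    · -- B₁
      rintro ⟨a, b, d, ha, hb, hd, h⟩
      have h01 := h 0 1 (by omega) (by omega)
      have h11 := h 1 1 (by omega) (by omega)
      have h21 := h 2 1 (by omega) (by omega)
      simp only [zero_mul, add_zero, one_mul, pow_one] at h01 h11 h21
      have hbd : 0 < b * d := Nat.mul_pos hb hd
      have hxy : b * a < b * (a + d) := by nlinarith
      have hyz : b * (a + d) < b * (a + 2 * d) := by nlinarith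
      exact no3 _ _ _ h01 h11 h21 hxy hyz (by ring)
    · -- B₂
      rintro ⟨a, b, d, ha, hb, hd, h⟩
      have h00 := h 0 0 (by omega) (by omega)
      have h01 := h 0 1 (by omega) (by omega)
      have h11 := h 1 1 (by omega) (by omega)
      simp only [zero_mul, add_zero, one_mul, pow_one, pow_zero, mul_one] at h00 h01 h11
      obtain ⟨t, ht, hbt⟩ := h00
      obtain ⟨i₀, hi₀, hba⟩ := h01
      obtain ⟨i₁, hi₁, hbad⟩ := h11
      have hbd : 0 < b * d := Nat.mul_pos hb hd
      have hlt : b * a < b * (a + d) := by nlinarith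
      have hii : i₀ < i₁ := by
        by_contra hcon
        push_neg at hcon
        have : i₁ * D ≤ i₀ * D := Nat.mul_le_mul_right D hcon
        omega
      have hsplit : b * a + b * d = b * (a + d) := by ring
      have e1 : i₁ * D = i₀ * D + b * d := by omega
      have e2 : (i₁ - i₀) * D = b * d := by
        rw [Nat.sub_mul, e1, Nat.add_sub_cancel_left]
      have hdvd : b ∣ (i₁ - i₀) * D := ⟨d, e2⟩
      have hcopAD : Nat.Coprime A D := by
        obtain ⟨c, hc⟩ : A ∣ A ^ (5 * K) := dvd_pow_self A (by omega)
        rw [hD, hc, Nat.add_comm]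
        exact (Nat.coprime_add_mul_left_right A 1 c).mpr (Nat.coprime_one_right A)
      have hcop : Nat.Coprime b D := by
        rw [hbt]
        exact (Nat.coprime_add_mul_right_left A D t).mpr hcopAD
      have hdvd2 : b ∣ i₁ - i₀ := hcop.dvd_of_dvd_mul_right hdvd
      have hble : b ≤ i₁ - i₀ := Nat.le_of_dvd (by omega) hdvd2
      have hbA : A ≤ b := by rw [hbt]; exact Nat.le_add_right _ _
      omega
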